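/- Let ε ∈ (0,1) with 1/ε ∈ ℤ, T > 0, and consider jobs of a single class with individual processing times < ε⁴T and total processing time P. Replacing them with ⌈P/(ε⁴T)⌉ placeholder jobs each of processing time exactly ε⁴T: any assignment of the original jobs to machines, where machine i receives total length P_i from this class, can be converted to an assignment of the placeholders where machine i receives at most ⌈P_i/(ε⁴T)⌉ placeholders, and Σ_i ⌈P_i/(ε⁴T)⌉ ≥ ⌈P/(ε⁴T)⌉; consequently the placeholder load on each machine exceeds the original by at most ε⁴T. -/
import Mathlib

lemma exists_split {ι : Type*} [DecidableEq ι] (s : Finset ι) (b : ι → ℕ) (N : ℕ)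
    (h : N ≤ ∑ i ∈ s, b i) :
    ∃ c : ι → ℕ, (∀ i, c i ≤ b i) ∧ ∑ i ∈ s, c i = N := by
  induction s using Finset.induction_on generalizing N with
  | empty =>
    simp at h
    exact ⟨fun _ => 0, fun _ => Nat.zero_le _, by simp [h]⟩
  | @insert a s ha ih =>
    rw [Finset.sum_insert ha] at h
    have h' : N - min N (b a) ≤ ∑ i ∈ s, b i := by omega
    obtain ⟨c, hc, hcs⟩ := ih _ h'
    refine ⟨Function.update c a (min N (b a)), ?_, ?_⟩
    · intro i
      rcases eq_or_ne i a with rfl | hi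
      · simp [Function.update_self]
      · simp [Function.update_of_ne hi, hc i]
    · rw [Finset.sum_insert ha, Function.update_self]
      have he : ∑ x ∈ s, Function.update c a (min N (b a)) x = ∑ x ∈ s, c x := by
        refine Finset.sum_congr rfl fun i hi => ?_
        have : i ≠ a := by rintro rfl; exact ha hi
        exact Function.update_of_ne this _ _
      rw [he, hcs]
      omega

/-- Replacing tiny jobs of one class by placeholders of size `ε⁴T`: if machine `i`
receives total tiny length `P_i`, the `⌈P/(ε⁴T)⌉` placeholders can be distributed so
that machine `i` receives at most `⌈P_i/(ε⁴T)⌉` of them; moreover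
`Σ_i ⌈P_i/(ε⁴T)⌉ ≥ ⌈P/(ε⁴T)⌉`, and the placeholder load on each machine exceeds the
original tiny load by at most `ε⁴T`. -/
theorem stmt15 (ε T : ℝ) (hε : ε ∈ Set.Ioo (0:ℝ) 1) (hT : 0 < T) (m : ℕ)
    (Pm : Fin m → ℝ) (hPm : ∀ i, 0 ≤ Pm i) :
    ⌈(∑ i, Pm i) / (ε^4 * T)⌉ ≤ ∑ i, ⌈Pm i / (ε^4 * T)⌉ ∧
    ∃ c : Fin m → ℕ, (∑ i, (c i : ℤ)) = ⌈(∑ i, Pm i) / (ε^4 * T)⌉ ∧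
      ∀ i, (c i : ℤ) ≤ ⌈Pm i / (ε^4 * T)⌉ ∧ (c i : ℝ) * (ε^4 * T) ≤ Pm i + ε^4 * T := by
  obtain ⟨hε0, hε1⟩ := hε
  set S : ℝ := ε^4 * T with hS
  have hS0 : 0 < S := by positivity
  have hceil : ∀ i, 0 ≤ ⌈Pm i / S⌉ := fun i =>
    Int.ceil_nonneg (div_nonneg (hPm i) hS0.le)
  have hmain : ⌈(∑ i, Pm i) / S⌉ ≤ ∑ i, ⌈Pm i / S⌉ := by
    rw [Int.ceil_le]
    push_cast
    rw [Finset.sum_div]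
    exact Finset.sum_le_sum fun i _ => Int.le_ceil _
  refine ⟨hmain, ?_⟩
  have hN0 : 0 ≤ ⌈(∑ i, Pm i) / S⌉ :=
    Int.ceil_nonneg (div_nonneg (Finset.sum_nonneg fun i _ => hPm i) hS0.le)
  have hle : ⌈(∑ i, Pm i) / S⌉.toNat ≤ ∑ i, ⌈Pm i / S⌉.toNat := by
    have h2 : (∑ i, (⌈Pm i / S⌉.toNat : ℤ)) = ∑ i, ⌈Pm i / S⌉ :=
      Finset.sum_congr rfl fun i _ => Int.toNat_of_nonneg (hceil i)
    have h3 : (⌈(∑ i, Pm i) / S⌉.toNat : ℤ) ≤ ∑ i, (⌈Pm i / S⌉.toNat : ℤ) := by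
      rw [Int.toNat_of_nonneg hN0, h2]; exact hmain
    exact_mod_cast h3
  obtain ⟨c, hc, hcs⟩ := exists_split Finset.univ (fun i => ⌈Pm i / S⌉.toNat)
    ⌈(∑ i, Pm i) / S⌉.toNat hle
  refine ⟨c, ?_, fun i => ?_⟩
  · have : ((∑ i, c i : ℕ) : ℤ) = ((⌈(∑ i, Pm i) / S⌉.toNat : ℕ) : ℤ) := by
      exact_mod_cast hcs
    rw [Int.toNat_of_nonneg hN0] at this
    rw [← this]; push_cast; ring
  · have hci : (c i : ℤ) ≤ ⌈Pm i / S⌉ := by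
      have := hc i
      have h2 : (c i : ℤ) ≤ (⌈Pm i / S⌉.toNat : ℤ) := by exact_mod_cast this
      rwa [Int.toNat_of_nonneg (hceil i)] at h2
    refine ⟨hci, ?_⟩
    have h1 : (c i : ℝ) ≤ (⌈Pm i / S⌉ : ℝ) := by exact_mod_cast hci
    have h2 : (⌈Pm i / S⌉ : ℝ) ≤ Pm i / S + 1 := (Int.ceil_lt_add_one _).le
    have h3 : (c i : ℝ) * S ≤ (Pm i / S + 1) * S :=
      mul_le_mul_of_nonneg_right (h1.trans h2) hS0.le
    calc (c i : ℝ) * S ≤ (Pm i / S + 1) * S := h3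
      _ = Pm i + S := by field_simp
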